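/- Let 0 < α < 1/2, T > 0, and M₁, M₂ > 0 with M₁/(1+z) ≤ E_{α,1}(−z) ≤ M₂/(1+z) for all z ≥ 0, and let K > 0 satisfy 2K²M₂²T² (1 + M₂²/((1−2α)M₁²)) < 1. Suppose v : [0,T] → ℓ²(J₂) is bounded and measurable and that for every t ∈ [0,T] and every j ∈ J₂: v(t)_j = K ∫₀^t E_{α,1}(−λ_j(t−s)^α) v(s)_j ds − K ∫₀^T ( E_{α,1}(−λ_j t^α) E_{α,1}(−λ_j(T−s)^α) / E_{α,1}(−λ_j T^α) ) v(s)_j ds. Then v(t) = 0 for every t ∈ [0,T]. -/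

import Mathlib

open Real MeasureTheory intervalIntegral

/-- The Mittag-Leffler function `E_{a,b}(z) = ∑_{i=0}^∞ z^i / Γ(a i + b)`. -/
noncomputable def mittagLeffler (a b z : ℝ) : ℝ :=
  ∑' i : ℕ, z ^ i / Real.Gamma (a * i + b)

/-- Pairs of positive integers. -/
abbrev J2 := ℕ+ × ℕ+

/-- `λ_j = j₁² + j₂²`. -/
def lam2 (j : J2) : ℝ := ((j.1 : ℕ) : ℝ) ^ 2 + ((j.2 : ℕ) : ℝ) ^ 2

/-- The Hilbert space `ℓ²(J₂)` of square-summable real families. -/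
noncomputable abbrev H2 := lp (fun _ : J2 => ℝ) 2

set_option maxHeartbeats 1000000 in
theorem stmt_19 (α T M₁ M₂ K : ℝ)
    (hα0 : 0 < α) (hα1 : α < 1 / 2) (hT : 0 < T) (hM₁ : 0 < M₁) (hM₂ : 0 < M₂)
    (hML : ∀ z : ℝ, 0 ≤ z →
      M₁ / (1 + z) ≤ mittagLeffler α 1 (-z) ∧ mittagLeffler α 1 (-z) ≤ M₂ / (1 + z))
    (hK0 : 0 < K)
    (hK : 2 * K ^ 2 * M₂ ^ 2 * T ^ 2 * (1 + M₂ ^ 2 / ((1 - 2 * α) * M₁ ^ 2)) < 1)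
    (v : ℝ → H2) (hvmeas : StronglyMeasurable v)
    (hvbdd : ∃ C : ℝ, ∀ t ∈ Set.Icc (0 : ℝ) T, ‖v t‖ ≤ C)
    (hveq : ∀ t ∈ Set.Icc (0 : ℝ) T, ∀ j : J2,
      (v t : ∀ _ : J2, ℝ) j =
        K * (∫ s in (0 : ℝ)..t,
            mittagLeffler α 1 (-(lam2 j * (t - s) ^ α)) * (v s : ∀ _ : J2, ℝ) j)
        - K * ∫ s in (0 : ℝ)..T,
            (mittagLeffler α 1 (-(lam2 j * t ^ α)) *
              mittagLeffler α 1 (-(lam2 j * (T - s) ^ α)) /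
              mittagLeffler α 1 (-(lam2 j * T ^ α))) * (v s : ∀ _ : J2, ℝ) j) :
    ∀ t ∈ Set.Icc (0 : ℝ) T, v t = 0 := by
  obtain ⟨C, hC⟩ := hvbdd
  have hα2 : 0 < 1 - 2 * α := by linarith
  have hα1' : 0 < 1 - α := by linarith
  -- basic bounds on the Mittag-Leffler function
  have hEpos : ∀ z : ℝ, 0 ≤ z → 0 < mittagLeffler α 1 (-z) := fun z hz =>
    lt_of_lt_of_le (div_pos hM₁ (by linarith)) (hML z hz).1
  have hEleM₂ : ∀ z : ℝ, 0 ≤ z → mittagLeffler α 1 (-z) ≤ M₂ := by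
    intro z hz
    refine le_trans (hML z hz).2 ?_
    rw [div_le_iff₀ (by linarith)]
    nlinarith
  -- the contraction factor
  set ρ : ℝ := K * M₂ * T + K * M₂ ^ 2 * T / (M₁ * (1 - α)) with hρdef
  have hρ0 : 0 ≤ ρ := by positivity
  have hρ1 : ρ < 1 := by
    have hb2 : (K * M₂ ^ 2 * T / (M₁ * (1 - α))) ^ 2
        = K ^ 2 * M₂ ^ 4 * T ^ 2 / (M₁ ^ 2 * (1 - α) ^ 2) := by
      rw [div_pow]; ring_nf
    have hac : (K * M₂ * T) ^ 2 * (M₂ ^ 2 / ((1 - 2 * α) * M₁ ^ 2))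
        = K ^ 2 * M₂ ^ 4 * T ^ 2 / ((1 - 2 * α) * M₁ ^ 2) := by
      field_simp
    have hdiv : K ^ 2 * M₂ ^ 4 * T ^ 2 / (M₁ ^ 2 * (1 - α) ^ 2)
        ≤ K ^ 2 * M₂ ^ 4 * T ^ 2 / ((1 - 2 * α) * M₁ ^ 2) := by
      apply div_le_div_of_nonneg_left (by positivity) (by positivity)
      nlinarith [sq_nonneg (M₁ * α)]
    have hsq : ρ ^ 2 ≤ 2 * (K * M₂ * T) ^ 2 + 2 * (K * M₂ ^ 2 * T / (M₁ * (1 - α))) ^ 2 := by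
      nlinarith [sq_nonneg (K * M₂ * T - K * M₂ ^ 2 * T / (M₁ * (1 - α)))]
    have hρsq : ρ ^ 2 < 1 := by
      calc ρ ^ 2 ≤ 2 * (K * M₂ * T) ^ 2 + 2 * (K * M₂ ^ 2 * T / (M₁ * (1 - α))) ^ 2 := hsq
        _ ≤ 2 * (K * M₂ * T) ^ 2 + 2 * ((K * M₂ * T) ^ 2 * (M₂ ^ 2 / ((1 - 2 * α) * M₁ ^ 2))) := by
            rw [hb2, hac]; linarith
        _ = 2 * K ^ 2 * M₂ ^ 2 * T ^ 2 * (1 + M₂ ^ 2 / ((1 - 2 * α) * M₁ ^ 2)) := by ring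
        _ < 1 := hK
    nlinarith
  -- the key contraction estimate
  have key : ∀ B : ℝ, 0 ≤ B →
      (∀ s ∈ Set.Icc (0 : ℝ) T, ∀ j : J2, |(v s : ∀ _ : J2, ℝ) j| ≤ B) →
      ∀ t ∈ Set.Icc (0 : ℝ) T, ∀ j : J2, |(v t : ∀ _ : J2, ℝ) j| ≤ ρ * B := by
    intro B hB hvB t ht j
    obtain ⟨ht0, htT⟩ := ht
    have hlam : 0 ≤ lam2 j := by unfold lam2; positivity
    -- bound on the first integral
    have hI₁ : |∫ s in (0 : ℝ)..t,
        mittagLeffler α 1 (-(lam2 j * (t - s) ^ α)) * (v s : ∀ _ : J2, ℝ) j|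
        ≤ M₂ * B * T := by
      have hb : ∀ s ∈ Set.uIoc (0 : ℝ) t,
          ‖mittagLeffler α 1 (-(lam2 j * (t - s) ^ α)) * (v s : ∀ _ : J2, ℝ) j‖ ≤ M₂ * B := by
        intro s hs
        rw [Set.uIoc_of_le ht0] at hs
        have hz : 0 ≤ lam2 j * (t - s) ^ α :=
          mul_nonneg hlam (Real.rpow_nonneg (by linarith [hs.2]) _)
        have hE1 : |mittagLeffler α 1 (-(lam2 j * (t - s) ^ α))| ≤ M₂ := by
          rw [abs_of_pos (hEpos _ hz)]; exact hEleM₂ _ hz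
        have hw : |(v s : ∀ _ : J2, ℝ) j| ≤ B := hvB s ⟨hs.1.le, hs.2.trans htT⟩ j
        rw [Real.norm_eq_abs, abs_mul]
        exact mul_le_mul hE1 hw (abs_nonneg _) hM₂.le
      calc |∫ s in (0 : ℝ)..t,
            mittagLeffler α 1 (-(lam2 j * (t - s) ^ α)) * (v s : ∀ _ : J2, ℝ) j|
          ≤ M₂ * B * |t - 0| := intervalIntegral.norm_integral_le_of_norm_le_const hb
        _ = M₂ * B * t := by rw [sub_zero, abs_of_nonneg ht0]
        _ ≤ M₂ * B * T := by
            have := mul_le_mul_of_nonneg_left htT (by positivity : (0:ℝ) ≤ M₂ * B)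
            linarith
    -- integrability of the singular weight for the second integral
    have hgbase : IntervalIntegrable (fun s : ℝ => (T - s) ^ (-α)) volume 0 T := by
      have h1 : IntervalIntegrable (fun x : ℝ => x ^ (-α)) volume 0 T :=
        intervalIntegrable_rpow' (by linarith)
      have h2 := (h1.comp_sub_left T).symm
      simpa using h2
    have hgint : IntervalIntegrable
        (fun s : ℝ => M₂ ^ 2 / M₁ * B * T ^ α * (T - s) ^ (-α)) volume 0 T :=
      hgbase.const_mul _
    -- value of the weight integral
    have hgval : (∫ s in (0 : ℝ)..T, M₂ ^ 2 / M₁ * B * T ^ α * (T - s) ^ (-α))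
        = M₂ ^ 2 / M₁ * B * T / (1 - α) := by
      rw [intervalIntegral.integral_const_mul]
      have h1 : (∫ s in (0 : ℝ)..T, (T - s) ^ (-α)) = ∫ x in (0 : ℝ)..T, x ^ (-α) := by
        have := intervalIntegral.integral_comp_sub_left (a := (0 : ℝ)) (b := T)
          (fun x : ℝ => x ^ (-α)) T
        simpa using this
      rw [h1, integral_rpow (Or.inl (by linarith))]
      rw [Real.zero_rpow (by intro h; linarith [h] : -α + 1 ≠ 0)]
      have hTsplit : T ^ α * T ^ (-α + 1) = T := by
        rw [← Real.rpow_add hT]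
        norm_num
      rw [sub_zero]
      calc M₂ ^ 2 / M₁ * B * T ^ α * (T ^ (-α + 1) / (-α + 1))
          = M₂ ^ 2 / M₁ * B * (T ^ α * T ^ (-α + 1)) / (1 - α) := by ring
        _ = M₂ ^ 2 / M₁ * B * T / (1 - α) := by rw [hTsplit]
    -- pointwise a.e. bound for the second integrand
    have hae : ∀ᵐ s ∂(volume.restrict (Set.uIoc (0 : ℝ) T)),
        ‖(mittagLeffler α 1 (-(lam2 j * t ^ α)) *
            mittagLeffler α 1 (-(lam2 j * (T - s) ^ α)) /
            mittagLeffler α 1 (-(lam2 j * T ^ α))) * (v s : ∀ _ : J2, ℝ) j‖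
          ≤ M₂ ^ 2 / M₁ * B * T ^ α * (T - s) ^ (-α) := by
      have hne : ∀ᵐ s : ℝ, s ≠ T := by
        have h0 : volume ({T} : Set ℝ) = 0 := measure_singleton T
        rw [ae_iff]
        convert h0 using 2
        ext s; simp
      filter_upwards [ae_restrict_of_ae hne, ae_restrict_mem measurableSet_uIoc]
        with s hsne hs
      rw [Set.uIoc_of_le hT.le] at hs
      have hsT : s < T := lt_of_le_of_ne hs.2 hsne
      have hu : 0 < T - s := by linarith
      set zt := lam2 j * t ^ α with hzt
      set zu := lam2 j * (T - s) ^ α with hzu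
      set zT := lam2 j * T ^ α with hzT
      have hzt0 : 0 ≤ zt := mul_nonneg hlam (Real.rpow_nonneg ht0 _)
      have hzu0 : 0 ≤ zu := mul_nonneg hlam (Real.rpow_nonneg hu.le _)
      have hzT0 : 0 ≤ zT := mul_nonneg hlam (Real.rpow_nonneg hT.le _)
      set A := (T / (T - s)) ^ α with hA
      have hA1 : 1 ≤ A := by
        rw [hA]
        calc (1 : ℝ) = 1 ^ α := (Real.one_rpow α).symm
          _ ≤ (T / (T - s)) ^ α := by
              apply Real.rpow_le_rpow (by norm_num) _ hα0.le
              rw [le_div_iff₀ hu]; nlinarith [hs.1]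
      have hAu : A * (T - s) ^ α = T ^ α := by
        rw [hA, Real.div_rpow hT.le hu.le, div_mul_cancel₀]
        exact (Real.rpow_pos_of_pos hu α).ne'
      -- key algebraic inequality
      have hkey : 1 + zT ≤ (1 + zt) * (1 + zu) * A := by
        have hzTA : zT = lam2 j * (A * (T - s) ^ α) := by rw [hAu]
        have h1 : 1 + zT ≤ (1 + zu) * A := by
          rw [hzTA]
          have : (1 + zu) * A = A + lam2 j * (A * (T - s) ^ α) := by rw [hzu]; ring
          rw [this]
          linarith
        have h2 : (1 + zu) * A ≤ (1 + zt) * ((1 + zu) * A) :=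
          le_mul_of_one_le_left (by positivity) (by linarith)
        calc 1 + zT ≤ (1 + zu) * A := h1
          _ ≤ (1 + zt) * ((1 + zu) * A) := h2
          _ = (1 + zt) * (1 + zu) * A := by ring
      -- bound the ratio
      have hEzt := (hML zt hzt0).2
      have hEzu := (hML zu hzu0).2
      have hEzT := (hML zT hzT0).1
      have hEztpos := hEpos zt hzt0
      have hEzupos := hEpos zu hzu0
      have hEzTpos := hEpos zT hzT0
      have hr : mittagLeffler α 1 (-zt) * mittagLeffler α 1 (-zu) / mittagLeffler α 1 (-zT)
          ≤ M₂ ^ 2 / M₁ * A := by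
        have step1 : mittagLeffler α 1 (-zt) * mittagLeffler α 1 (-zu) /
            mittagLeffler α 1 (-zT)
            ≤ (M₂ / (1 + zt) * (M₂ / (1 + zu))) / (M₁ / (1 + zT)) := by
          apply div_le_div₀ (by positivity)
            (mul_le_mul hEzt hEzu hEzupos.le (by positivity))
            (by positivity) hEzT
        have step2 : (M₂ / (1 + zt) * (M₂ / (1 + zu))) / (M₁ / (1 + zT))
            ≤ M₂ ^ 2 / M₁ * A := by
          have e : (M₂ / (1 + zt) * (M₂ / (1 + zu))) / (M₁ / (1 + zT))
              = M₂ ^ 2 * (1 + zT) / ((1 + zt) * (1 + zu) * M₁) := by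
            field_simp
          rw [e, div_le_iff₀ (by positivity)]
          have e2 : M₂ ^ 2 / M₁ * A * ((1 + zt) * (1 + zu) * M₁)
              = M₂ ^ 2 * ((1 + zt) * (1 + zu) * A) := by
            field_simp
          rw [e2]
          nlinarith [sq_nonneg M₂]
        linarith
      -- conclude the pointwise bound
      have hw : |(v s : ∀ _ : J2, ℝ) j| ≤ B := hvB s ⟨hs.1.le, hs.2⟩ j
      have hrpos : 0 < mittagLeffler α 1 (-zt) * mittagLeffler α 1 (-zu) /
          mittagLeffler α 1 (-zT) := by positivity
      rw [Real.norm_eq_abs, abs_mul, abs_of_pos hrpos]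
      have hAeq : M₂ ^ 2 / M₁ * B * T ^ α * (T - s) ^ (-α) = M₂ ^ 2 / M₁ * A * B := by
        rw [hA, Real.div_rpow hT.le hu.le, Real.rpow_neg hu.le]
        field_simp
      rw [hAeq]
      calc mittagLeffler α 1 (-zt) * mittagLeffler α 1 (-zu) / mittagLeffler α 1 (-zT) *
            |(v s : ∀ _ : J2, ℝ) j|
          ≤ (M₂ ^ 2 / M₁ * A) * B := by
            apply mul_le_mul hr hw (abs_nonneg _) (by positivity)
        _ = M₂ ^ 2 / M₁ * A * B := by ring
    -- bound on the second integral
    have hI₂ : |∫ s in (0 : ℝ)..T,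
        (mittagLeffler α 1 (-(lam2 j * t ^ α)) *
          mittagLeffler α 1 (-(lam2 j * (T - s) ^ α)) /
          mittagLeffler α 1 (-(lam2 j * T ^ α))) * (v s : ∀ _ : J2, ℝ) j|
        ≤ M₂ ^ 2 / M₁ * B * T / (1 - α) := by
      have h := intervalIntegral.norm_integral_le_abs_of_norm_le hae hgint
      rw [Real.norm_eq_abs] at h
      refine h.trans ?_
      rw [hgval, abs_of_nonneg (by positivity)]
    -- put everything together
    rw [hveq t ⟨ht0, htT⟩ j]
    refine le_trans (abs_sub _ _) ?_
    rw [abs_mul, abs_mul, abs_of_pos hK0]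
    have h1 := mul_le_mul_of_nonneg_left hI₁ hK0.le
    have h2 := mul_le_mul_of_nonneg_left hI₂ hK0.le
    have hsum : K * (M₂ * B * T) + K * (M₂ ^ 2 / M₁ * B * T / (1 - α)) = ρ * B := by
      rw [hρdef]
      field_simp
    linarith
  -- iterate the contraction
  set C₀ : ℝ := max C 0 with hC₀
  have hC₀0 : 0 ≤ C₀ := le_max_right _ _
  have hiter : ∀ n : ℕ, ∀ t ∈ Set.Icc (0 : ℝ) T, ∀ j : J2,
      |(v t : ∀ _ : J2, ℝ) j| ≤ ρ ^ n * C₀ := by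
    intro n
    induction n with
    | zero =>
      intro t ht j
      simp only [pow_zero, one_mul]
      calc |(v t : ∀ _ : J2, ℝ) j| = ‖(v t : ∀ _ : J2, ℝ) j‖ := (Real.norm_eq_abs _).symm
        _ ≤ ‖v t‖ := lp.norm_apply_le_norm (by norm_num) (v t) j
        _ ≤ C := hC t ht
        _ ≤ C₀ := le_max_left _ _
    | succ n ih =>
      intro t ht j
      have h := key (ρ ^ n * C₀) (by positivity) ih t ht j
      calc |(v t : ∀ _ : J2, ℝ) j| ≤ ρ * (ρ ^ n * C₀) := h
        _ = ρ ^ (n + 1) * C₀ := by ring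
  -- conclude
  intro t ht
  have hcoord : ∀ j : J2, (v t : ∀ _ : J2, ℝ) j = 0 := by
    intro j
    have hlim : Filter.Tendsto (fun n : ℕ => ρ ^ n * C₀) Filter.atTop (nhds 0) := by
      have := (tendsto_pow_atTop_nhds_zero_of_lt_one hρ0 hρ1).mul_const C₀
      simpa using this
    have hle : |(v t : ∀ _ : J2, ℝ) j| ≤ 0 :=
      ge_of_tendsto' hlim (fun n => hiter n t ht j)
    exact abs_eq_zero.mp (le_antisymm hle (abs_nonneg _))
  apply lp.ext
  funext j
  simpa using hcoord j
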